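/- arXiv:2305.09030 — 5 statements merged into one kernel-verified Lean document; each statement's English description precedes it below -/
import Mathlib

section
/- Let X be the formal power series in ℤ⟦t⟧ whose coefficient of tⁿ is the number of Motzkin paths of length n. Then t²·X² + (t − 1)·X + 1 = 0 in ℤ⟦t⟧, i.e. X = 1 + t·X + t²·X². -/
open Finset

/-- Height after `i` steps of the walk `s`, starting at height `a`. -/
def height {n : ℕ} (a : ℤ) (s : Fin n → ℤ) (i : ℕ) : ℤ :=
  a + ∑ j ∈ Finset.univ.filter (fun j : Fin n => (j : ℕ) < i), s j

open scoped Classical in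
/-- Motzkin paths of length `n`: sequences of steps in {1, 0, -1} whose partial sums
stay ≥ 0 and end at 0. -/
noncomputable def motzkinPaths (n : ℕ) : Finset (Fin n → ℤ) :=
  (Fintype.piFinset fun _ => ({1, 0, -1} : Finset ℤ)).filter
    (fun s => (∀ i ∈ Finset.Icc 1 n, 0 ≤ height 0 s i) ∧ height 0 s n = 0)

namespace MotzkinAux

lemma height_zero {n : ℕ} (a : ℤ) (s : Fin n → ℤ) : height a s 0 = a := by
  simp [height]

lemma height_succ {n : ℕ} (a : ℤ) (s : Fin n → ℤ) {i : ℕ} (h : i < n) :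
    height a s (i + 1) = height a s i + s ⟨i, h⟩ := by
  classical
  unfold height
  have he : Finset.univ.filter (fun j : Fin n => (j : ℕ) < i + 1)
      = insert (⟨i, h⟩ : Fin n) (Finset.univ.filter (fun j : Fin n => (j : ℕ) < i)) := by
    ext j
    simp only [Finset.mem_filter, Finset.mem_univ, true_and, Finset.mem_insert, Fin.ext_iff]
    omega
  rw [he, Finset.sum_insert (by simp)]
  ring

lemma height_agree {n m : ℕ} (s : Fin n → ℤ) (t : Fin m → ℤ) (p : ℕ)
    (hag : ∀ (j : ℕ) (h1 : j < m) (h2 : p + j < n), t ⟨j, h1⟩ = s ⟨p + j, h2⟩) :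
    ∀ i, i ≤ m → p + i ≤ n → height 0 t i = height 0 s (p + i) - height 0 s p := by
  intro i
  induction i with
  | zero => simp [height_zero]
  | succ i ih =>
    intro h1 h2
    have hi : i < m := by omega
    have hpi : p + i < n := by omega
    rw [height_succ 0 t hi, ih (by omega) (by omega), hag i hi hpi]
    have hpi1 : p + (i + 1) = (p + i) + 1 := by omega
    rw [hpi1, height_succ 0 s hpi]
    ring

lemma mem_motzkin {n : ℕ} {s : Fin n → ℤ} :
    s ∈ motzkinPaths n ↔
      (∀ j, s j = 1 ∨ s j = 0 ∨ s j = -1) ∧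
      (∀ i ∈ Finset.Icc 1 n, 0 ≤ height 0 s i) ∧ height 0 s n = 0 := by
  classical
  simp [motzkinPaths, Fintype.mem_piFinset, and_assoc]

lemma card0 : (motzkinPaths 0).card = 1 := by
  classical
  have : motzkinPaths 0 = {fun j : Fin 0 => j.elim0} := by
    ext s
    simp only [mem_motzkin, Finset.mem_singleton]
    constructor
    · intro _; funext j; exact j.elim0
    · intro h
      refine ⟨fun j => j.elim0, ?_, ?_⟩
      · intro i hi; simp at hi
      · exact height_zero 0 s
  rw [this, Finset.card_singleton]


open scoped Classical in
noncomputable def setA (n : ℕ) : Finset (Fin (n+1) → ℤ) :=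
  (motzkinPaths (n+1)).filter (fun s => s 0 = 0)


lemma cardA (n : ℕ) : (setA n).card = (motzkinPaths n).card := by
  classical
  apply Finset.card_bij (fun s _ => fun j : Fin n => s j.succ)
  · -- maps into motzkinPaths n
    intro s hs
    simp only [setA, Finset.mem_filter] at hs
    obtain ⟨hsm, hs0⟩ := hs
    rw [mem_motzkin] at hsm
    obtain ⟨hsteps, hge, hend⟩ := hsm
    have hag : ∀ (j : ℕ) (h1 : j < n) (h2 : 1 + j < n + 1),
        (fun j : Fin n => s j.succ) ⟨j, h1⟩ = s ⟨1 + j, h2⟩ := by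
      intro j h1 h2
      simp only
      congr 1
      ext
      simp [Nat.add_comm]
    have h1 : height 0 s 1 = 0 := by
      have h0 := height_succ 0 s (show 0 < n + 1 by omega)
      rw [height_zero] at h0
      simpa [hs0] using h0
    have key : ∀ i, i ≤ n → height 0 (fun j : Fin n => s j.succ) i = height 0 s (1 + i) := by
      intro i hi
      rw [height_agree s _ 1 hag i hi (by omega), h1, sub_zero]
    rw [mem_motzkin]
    refine ⟨fun j => hsteps j.succ, ?_, ?_⟩
    · intro i hi
      simp only [Finset.mem_Icc] at hi
      rw [key i hi.2]
      exact hge (1 + i) (by simp only [Finset.mem_Icc]; omega)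
    · rw [key n le_rfl, show 1 + n = n + 1 from by omega]; exact hend
  · -- injective
    intro s1 h1 s2 h2 heq
    simp only [setA, Finset.mem_filter] at h1 h2
    funext i
    rcases Fin.eq_zero_or_eq_succ i with h0 | ⟨j, rfl⟩
    · rw [h0, h1.2, h2.2]
    · exact congrFun heq j
  · -- surjective
    intro t ht
    refine ⟨Fin.cons 0 t, ?_, ?_⟩
    · rw [mem_motzkin] at ht
      obtain ⟨hsteps, hge, hend⟩ := ht
      have hag : ∀ (j : ℕ) (h1 : j < n) (h2 : 1 + j < n + 1),
          t ⟨j, h1⟩ = (Fin.cons (0:ℤ) t : Fin (n+1) → ℤ) ⟨1 + j, h2⟩ := by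
        intro j h1 h2
        have : (⟨1 + j, h2⟩ : Fin (n+1)) = Fin.succ ⟨j, h1⟩ := by
          ext; simp [Nat.add_comm]
        rw [this, Fin.cons_succ]
      have h1 : height 0 (Fin.cons (0:ℤ) t : Fin (n+1) → ℤ) 1 = 0 := by
        have h0 := height_succ 0 (Fin.cons (0:ℤ) t : Fin (n+1) → ℤ) (show 0 < n + 1 by omega)
        rw [height_zero] at h0
        simpa using h0
      have key : ∀ i, i ≤ n → height 0 (Fin.cons (0:ℤ) t : Fin (n+1) → ℤ) (1 + i) = height 0 t i := by
        intro i hi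
        rw [height_agree (Fin.cons (0:ℤ) t : Fin (n+1) → ℤ) t 1 hag i hi (by omega), h1, sub_zero]
      simp only [setA, Finset.mem_filter]
      refine ⟨?_, by simp⟩
      rw [mem_motzkin]
      refine ⟨?_, ?_, ?_⟩
      · intro j
        rcases Fin.eq_zero_or_eq_succ j with h0 | ⟨j', rfl⟩
        · rw [h0, Fin.cons_zero]; right; left; rfl
        · rw [Fin.cons_succ]; exact hsteps j'
      · intro i hi
        simp only [Finset.mem_Icc] at hi
        obtain ⟨hi1, hi2⟩ := hi
        obtain ⟨i', rfl⟩ : ∃ i', i = 1 + i' := ⟨i - 1, by omega⟩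
        rw [key i' (by omega)]
        rcases Nat.eq_zero_or_pos i' with h | h
        · rw [h, height_zero]
        · exact hge i' (by simp only [Finset.mem_Icc]; omega)
      · have h2 := key n le_rfl
        rw [Nat.add_comm 1 n] at h2
        rw [h2]; exact hend
    · funext j; simp [Fin.cons_succ]


open scoped Classical in
noncomputable def setB (n k : ℕ) : Finset (Fin (n+1) → ℤ) :=
  (motzkinPaths (n+1)).filter
    (fun s => s 0 = 1 ∧ height 0 s (k+2) = 0 ∧ ∀ i ∈ Finset.Icc 1 (k+1), 1 ≤ height 0 s i)

lemma height_one {n : ℕ} (s : Fin (n+1) → ℤ) : height 0 s 1 = s 0 := by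
  have h0 := height_succ 0 s (show 0 < n + 1 by omega)
  rw [height_zero] at h0
  simpa using h0

lemma setB_facts {n k : ℕ} (hk : k + 1 ≤ n) {s : Fin (n+1) → ℤ} (hs : s ∈ setB n k) :
    height 0 s (k+1) = 1 ∧ s ⟨k+1, by omega⟩ = -1 := by
  classical
  simp only [setB, Finset.mem_filter] at hs
  obtain ⟨hsm, hs0, hk2, hpos⟩ := hs
  rw [mem_motzkin] at hsm
  obtain ⟨hsteps, hge, hend⟩ := hsm
  have hstep := height_succ 0 s (show k + 1 < n + 1 by omega)
  rw [hk2] at hstep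
  have h1 : 1 ≤ height 0 s (k+1) := hpos (k+1) (by simp)
  have hv := hsteps ⟨k+1, by omega⟩
  constructor <;> omega

def glue (n k m : ℕ) (hkm : k + m + 1 = n) (P : Fin k → ℤ) (Q : Fin m → ℤ) :
    Fin (n+1) → ℤ := fun i =>
  if h0 : (i:ℕ) = 0 then 1
  else if h1 : (i:ℕ) ≤ k then P ⟨(i:ℕ) - 1, by omega⟩
  else if h2 : (i:ℕ) = k + 1 then -1
  else Q ⟨(i:ℕ) - k - 2, by have hi := i.isLt; omega⟩

lemma glue_at0 (n k m : ℕ) (hkm : k + m + 1 = n) (P : Fin k → ℤ) (Q : Fin m → ℤ)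
    (h : 0 < n+1) : glue n k m hkm P Q ⟨0, h⟩ = 1 := by
  simp [glue]

lemma glue_P (n k m : ℕ) (hkm : k + m + 1 = n) (P : Fin k → ℤ) (Q : Fin m → ℤ)
    {j : ℕ} (hj : j < k) (h2 : 1 + j < n + 1) :
    glue n k m hkm P Q ⟨1 + j, h2⟩ = P ⟨j, hj⟩ := by
  unfold glue
  rw [dif_neg (by simp only [Fin.val_mk]; omega), dif_pos (by simp only [Fin.val_mk]; omega)]
  congr 1
  ext
  simp

lemma glue_k1 (n k m : ℕ) (hkm : k + m + 1 = n) (P : Fin k → ℤ) (Q : Fin m → ℤ)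
    (h2 : k + 1 < n + 1) :
    glue n k m hkm P Q ⟨k + 1, h2⟩ = -1 := by
  unfold glue
  rw [dif_neg (by simp only [Fin.val_mk]; omega), dif_neg (by simp only [Fin.val_mk]; omega),
    dif_pos (by simp only [Fin.val_mk])]

lemma glue_Q (n k m : ℕ) (hkm : k + m + 1 = n) (P : Fin k → ℤ) (Q : Fin m → ℤ)
    {j : ℕ} (hj : j < m) (h2 : k + 2 + j < n + 1) :
    glue n k m hkm P Q ⟨k + 2 + j, h2⟩ = Q ⟨j, hj⟩ := by
  unfold glue
  rw [dif_neg (by simp only [Fin.val_mk]; omega), dif_neg (by simp only [Fin.val_mk]; omega),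
    dif_neg (by simp only [Fin.val_mk]; omega)]
  congr 1
  ext
  simp
  omega

lemma cardB (n k m : ℕ) (hkm : k + m + 1 = n) :
    (setB n k).card = (motzkinPaths k).card * (motzkinPaths m).card := by
  classical
  rw [← Finset.card_product]
  apply Finset.card_bij
    (fun s _ => ((fun j : Fin k => s ⟨(j:ℕ) + 1, by have := j.isLt; omega⟩),
                 (fun j : Fin m => s ⟨(j:ℕ) + k + 2, by have := j.isLt; omega⟩)))
  · -- maps into product
    intro s hs
    have hfacts := setB_facts (by omega) hs
    simp only [setB, Finset.mem_filter] at hs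
    obtain ⟨hsm, hs0, hk2, hpos⟩ := hs
    rw [mem_motzkin] at hsm
    obtain ⟨hsteps, hge, hend⟩ := hsm
    have h1 : height 0 s 1 = 1 := by rw [height_one, hs0]
    have hagP : ∀ (j : ℕ) (hj : j < k) (h2 : 1 + j < n + 1),
        (fun j : Fin k => s ⟨(j:ℕ) + 1, by have := j.isLt; omega⟩) ⟨j, hj⟩ = s ⟨1 + j, h2⟩ := by
      intro j hj h2
      simp only
      congr 1
      ext
      simp [Nat.add_comm]
    have keyP : ∀ i, i ≤ k →
        height 0 (fun j : Fin k => s ⟨(j:ℕ) + 1, by have := j.isLt; omega⟩) i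
          = height 0 s (1 + i) - 1 := by
      intro i hi
      rw [height_agree s _ 1 hagP i hi (by omega), h1]
    have hagQ : ∀ (j : ℕ) (hj : j < m) (h2 : (k+2) + j < n + 1),
        (fun j : Fin m => s ⟨(j:ℕ) + k + 2, by have := j.isLt; omega⟩) ⟨j, hj⟩
          = s ⟨(k+2) + j, h2⟩ := by
      intro j hj h2
      simp only
      congr 1
      ext
      simp
      omega
    have keyQ : ∀ i, i ≤ m →
        height 0 (fun j : Fin m => s ⟨(j:ℕ) + k + 2, by have := j.isLt; omega⟩) i
          = height 0 s ((k+2) + i) := by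
      intro i hi
      rw [height_agree s _ (k+2) hagQ i hi (by omega), hk2, sub_zero]
    rw [Finset.mem_product]
    constructor
    · rw [mem_motzkin]
      refine ⟨fun j => hsteps _, ?_, ?_⟩
      · intro i hi
        simp only [Finset.mem_Icc] at hi
        rw [keyP i hi.2]
        have := hpos (1 + i) (by simp only [Finset.mem_Icc]; omega)
        omega
      · rw [keyP k le_rfl, Nat.add_comm 1 k, hfacts.1, sub_self]
    · rw [mem_motzkin]
      refine ⟨fun j => hsteps _, ?_, ?_⟩
      · intro i hi
        simp only [Finset.mem_Icc] at hi
        rw [keyQ i hi.2]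
        exact hge _ (by simp only [Finset.mem_Icc]; omega)
      · rw [keyQ m le_rfl, show k + 2 + m = n + 1 from by omega]
        exact hend
  · -- injective
    intro s1 hs1 s2 hs2 heq
    have hf1 := setB_facts (by omega) hs1
    have hf2 := setB_facts (by omega) hs2
    simp only [Prod.mk.injEq] at heq
    obtain ⟨hP, hQ⟩ := heq
    simp only [setB, Finset.mem_filter] at hs1 hs2
    funext i
    have hi := i.isLt
    by_cases h0 : (i:ℕ) = 0
    · have : i = 0 := by ext; simpa using h0
      rw [this, hs1.2.1, hs2.2.1]
    · by_cases h1 : (i:ℕ) ≤ k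
      · have := congrFun hP ⟨(i:ℕ) - 1, by omega⟩
        simp only at this
        have hidx : (⟨(i:ℕ) - 1 + 1, by omega⟩ : Fin (n+1)) = i := by ext; simp; omega
        rwa [hidx] at this
      · by_cases h2 : (i:ℕ) = k + 1
        · have hidx : i = (⟨k + 1, by omega⟩ : Fin (n+1)) := by ext; simpa using h2
          rw [hidx, hf1.2, hf2.2]
        · have := congrFun hQ ⟨(i:ℕ) - k - 2, by omega⟩
          simp only at this
          have hidx : (⟨(i:ℕ) - k - 2 + k + 2, by omega⟩ : Fin (n+1)) = i := by
            ext; simp; omega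
          rwa [hidx] at this
  · -- surjective
    intro pq hpq
    rw [Finset.mem_product] at hpq
    obtain ⟨hPm, hQm⟩ := hpq
    obtain ⟨P, Q⟩ := pq
    rw [mem_motzkin] at hPm hQm
    obtain ⟨hPsteps, hPge, hPend⟩ := hPm
    obtain ⟨hQsteps, hQge, hQend⟩ := hQm
    replace hPsteps : ∀ j, P j = 1 ∨ P j = 0 ∨ P j = -1 := hPsteps
    replace hPge : ∀ i ∈ Finset.Icc 1 k, 0 ≤ height 0 P i := hPge
    replace hPend : height 0 P k = 0 := hPend
    replace hQsteps : ∀ j, Q j = 1 ∨ Q j = 0 ∨ Q j = -1 := hQsteps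
    replace hQge : ∀ i ∈ Finset.Icc 1 m, 0 ≤ height 0 Q i := hQge
    replace hQend : height 0 Q m = 0 := hQend
    refine ⟨glue n k m hkm P Q, ?_, ?_⟩
    · -- membership in setB
      set s := glue n k m hkm P Q with hsdef
      have hs0 : s 0 = 1 := by
        have : (0 : Fin (n+1)) = ⟨0, by omega⟩ := by ext; simp
        rw [this]
        exact glue_at0 n k m hkm P Q _
      have h1 : height 0 s 1 = 1 := by rw [height_one, hs0]
      have hagP : ∀ (j : ℕ) (hj : j < k) (h2 : 1 + j < n + 1),
          P ⟨j, hj⟩ = s ⟨1 + j, h2⟩ := by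
        intro j hj h2
        rw [hsdef, glue_P n k m hkm P Q hj h2]
      have keyP : ∀ i, i ≤ k → height 0 s (1 + i) = 1 + height 0 P i := by
        intro i hi
        rw [height_agree s P 1 hagP i hi (by omega), h1]
        ring
      have hk1 : height 0 s (k + 1) = 1 := by
        rw [Nat.add_comm k 1, keyP k le_rfl, hPend]; norm_num
      have hsk1 : s ⟨k+1, by omega⟩ = -1 := glue_k1 n k m hkm P Q _
      have hk2 : height 0 s (k + 2) = 0 := by
        have := height_succ 0 s (show k + 1 < n + 1 by omega)
        rw [hk1, hsk1] at this
        rw [show k + 2 = k + 1 + 1 from rfl, this]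
        ring
      have hagQ : ∀ (j : ℕ) (hj : j < m) (h2 : (k+2) + j < n + 1),
          Q ⟨j, hj⟩ = s ⟨(k+2) + j, h2⟩ := by
        intro j hj h2
        rw [hsdef, glue_Q n k m hkm P Q hj h2]
      have keyQ : ∀ i, i ≤ m → height 0 s ((k+2) + i) = height 0 Q i := by
        intro i hi
        rw [height_agree s Q (k+2) hagQ i hi (by omega), hk2, sub_zero]
      have hgeAll : ∀ i ∈ Finset.Icc 1 (n+1), 0 ≤ height 0 s i := by
        intro i hi
        simp only [Finset.mem_Icc] at hi
        by_cases hik : i ≤ k + 1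
        · obtain ⟨i', rfl⟩ : ∃ i', i = 1 + i' := ⟨i - 1, by omega⟩
          rw [keyP i' (by omega)]
          rcases Nat.eq_zero_or_pos i' with h | h
          · rw [h, height_zero]; norm_num
          · have := hPge i' (by simp only [Finset.mem_Icc]; omega)
            omega
        · obtain ⟨i', rfl⟩ : ∃ i', i = (k+2) + i' := ⟨i - k - 2, by omega⟩
          rw [keyQ i' (by omega)]
          rcases Nat.eq_zero_or_pos i' with h | h
          · rw [h, height_zero]
          · exact hQge i' (by simp only [Finset.mem_Icc]; omega)
      simp only [setB, Finset.mem_filter]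
      refine ⟨?_, hs0, hk2, ?_⟩
      · rw [mem_motzkin]
        refine ⟨?_, hgeAll, ?_⟩
        · intro j
          rw [hsdef]
          unfold glue
          split_ifs with a b c
          · left; rfl
          · exact hPsteps _
          · right; right; rfl
          · exact hQsteps _
        · have h3 := keyQ m le_rfl
          rw [show k + 2 + m = n + 1 from by omega] at h3
          rw [h3]; exact hQend
      · intro i hi
        simp only [Finset.mem_Icc] at hi
        obtain ⟨i', rfl⟩ : ∃ i', i = 1 + i' := ⟨i - 1, by omega⟩
        rw [keyP i' (by omega)]
        rcases Nat.eq_zero_or_pos i' with h | h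
        · rw [h, height_zero]; norm_num
        · have := hPge i' (by simp only [Finset.mem_Icc]; omega)
          omega
    · -- image is (P, Q)
      simp only [Prod.mk.injEq]
      constructor
      · funext j
        have h2 : 1 + (j:ℕ) < n + 1 := by have := j.isLt; omega
        have := glue_P n k m hkm P Q j.isLt h2
        have hidx : (⟨(j:ℕ) + 1, by have := j.isLt; omega⟩ : Fin (n+1))
            = ⟨1 + (j:ℕ), h2⟩ := by ext; simp [Nat.add_comm]
        rw [hidx, this]
      · funext j
        have h2 : k + 2 + (j:ℕ) < n + 1 := by have := j.isLt; omega
        have := glue_Q n k m hkm P Q j.isLt h2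
        have hidx : (⟨(j:ℕ) + k + 2, by have := j.isLt; omega⟩ : Fin (n+1))
            = ⟨k + 2 + (j:ℕ), h2⟩ := by ext; simp; omega
        rw [hidx, this]

lemma partition (n : ℕ) :
    motzkinPaths (n+1) = setA n ∪ (Finset.range n).biUnion (setB n) := by
  classical
  ext s
  constructor
  · intro hs
    have hsm := hs
    rw [mem_motzkin] at hsm
    obtain ⟨hsteps, hge, hend⟩ := hsm
    have h1 : height 0 s 1 = s 0 := height_one s
    have hge1 : 0 ≤ s 0 := by
      have := hge 1 (by simp)
      rwa [h1] at this
    rcases hsteps 0 with h | h | h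
    · -- s 0 = 1 : first return decomposition
      rw [Finset.mem_union]
      right
      rw [Finset.mem_biUnion]
      have hne : ((Finset.Icc 1 (n+1)).filter (fun i => height 0 s i = 0)).Nonempty :=
        ⟨n+1, by simp [hend]⟩
      set r := ((Finset.Icc 1 (n+1)).filter (fun i => height 0 s i = 0)).min' hne with hr
      have hrmem := Finset.min'_mem _ hne
      rw [← hr] at hrmem
      simp only [Finset.mem_filter, Finset.mem_Icc] at hrmem
      obtain ⟨⟨hr1, hr2⟩, hr0⟩ := hrmem
      have hrne1 : r ≠ 1 := by
        intro hcon
        rw [hcon, h1, h] at hr0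
        exact one_ne_zero hr0
      have hr2' : 2 ≤ r := by omega
      refine ⟨r - 2, ?_, ?_⟩
      · simp only [Finset.mem_range]; omega
      · simp only [setB, Finset.mem_filter]
        refine ⟨hs, h, ?_, ?_⟩
        · rw [show r - 2 + 2 = r from by omega]; exact hr0
        · intro i hi
          simp only [Finset.mem_Icc] at hi
          have hge' := hge i (by simp only [Finset.mem_Icc]; omega)
          by_contra hcon
          have hzero : height 0 s i = 0 := by omega
          have : r ≤ i := Finset.min'_le _ i
            (by simp only [Finset.mem_filter, Finset.mem_Icc]
                exact ⟨⟨hi.1, by omega⟩, hzero⟩)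
          omega
    · rw [Finset.mem_union]
      left
      simp only [setA, Finset.mem_filter]
      exact ⟨hs, h⟩
    · exfalso; rw [h] at hge1; omega
  · intro hs
    rcases Finset.mem_union.mp hs with h | h
    · simp only [setA, Finset.mem_filter] at h
      exact h.1
    · rw [Finset.mem_biUnion] at h
      obtain ⟨k, _, hk⟩ := h
      simp only [setB, Finset.mem_filter] at hk
      exact hk.1

lemma motzkin_rec (n : ℕ) :
    (motzkinPaths (n+1)).card
      = (motzkinPaths n).card
        + ∑ k ∈ Finset.range n, (motzkinPaths k).card * (motzkinPaths (n-1-k)).card := by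
  classical
  rw [partition n]
  rw [Finset.card_union_of_disjoint, Finset.card_biUnion, cardA]
  · congr 1
    apply Finset.sum_congr rfl
    intro k hk
    simp only [Finset.mem_range] at hk
    exact cardB n k (n-1-k) (by omega)
  · -- pairwise disjoint setB
    intro a ha b hb hab
    have key : ∀ a b : ℕ, a < b → Disjoint (setB n a) (setB n b) := by
      intro a b hlt
      rw [Finset.disjoint_left]
      intro s hsa hsb
      simp only [setB, Finset.mem_filter] at hsa hsb
      have h0 := hsa.2.2.1
      have h1 := hsb.2.2.2 (a+2) (by simp only [Finset.mem_Icc]; omega)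
      omega
    rcases lt_or_gt_of_ne hab with h | h
    · exact key a b h
    · exact (key b a h).symm
  · -- setA disjoint from biUnion
    rw [Finset.disjoint_right]
    intro s hsb hsa
    simp only [Finset.mem_biUnion] at hsb
    obtain ⟨k, _, hk⟩ := hsb
    simp only [setB, Finset.mem_filter] at hk
    simp only [setA, Finset.mem_filter] at hsa
    rw [hsa.2] at hk
    exact one_ne_zero hk.2.1.symm


end MotzkinAux

open MotzkinAux PowerSeries in
/-- the generating function of Motzkin paths satisfies
t²X² + (t − 1)X + 1 = 0, i.e. X = 1 + tX + t²X². -/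
theorem stmt2 :
    (PowerSeries.X : PowerSeries ℤ) ^ 2 *
        (PowerSeries.mk fun n => ((motzkinPaths n).card : ℤ)) ^ 2
      + ((PowerSeries.X : PowerSeries ℤ) - 1) *
        (PowerSeries.mk fun n => ((motzkinPaths n).card : ℤ)) + 1 = 0 := by
  set f : PowerSeries ℤ := PowerSeries.mk fun n => ((motzkinPaths n).card : ℤ) with hfdef
  have hf : f = 1 + f * X ^ 1 + f ^ 2 * X ^ 2 := by
    ext n
    rw [map_add, map_add, PowerSeries.coeff_mul_X_pow', PowerSeries.coeff_mul_X_pow',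
      PowerSeries.coeff_one, hfdef, PowerSeries.coeff_mk]
    match n with
    | 0 => simp [card0]
    | 1 =>
      have h := motzkin_rec 0
      simp at h
      simp [h, PowerSeries.coeff_mk]
    | (m+2) =>
      have h := motzkin_rec (m+1)
      rw [if_neg (by omega), if_pos (by omega), if_pos (by omega)]
      have hsq : (PowerSeries.coeff (R := ℤ) (m + 2 - 2)) (f ^ 2)
          = ∑ k ∈ Finset.range (m+1),
              ((motzkinPaths k).card : ℤ) * ((motzkinPaths (m-k)).card : ℤ) := by
        rw [show m + 2 - 2 = m from rfl, sq, PowerSeries.coeff_mul,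
          Finset.Nat.sum_antidiagonal_eq_sum_range_succ_mk]
        simp [hfdef, PowerSeries.coeff_mk]
      rw [hsq, show m + 2 - 1 = m + 1 from rfl, PowerSeries.coeff_mk, h]
      push_cast
      have : ∀ k ∈ Finset.range (m+1),
          ((motzkinPaths k).card : ℤ) * ((motzkinPaths (m+1-1-k)).card : ℤ)
            = ((motzkinPaths k).card : ℤ) * ((motzkinPaths (m-k)).card : ℤ) := by
        intro k _
        congr 2
      rw [Finset.sum_congr rfl this]
      ring
  linear_combination -1 * hf
end

section
/- Fix a finite set S of integers. For all integers a ≥ 1, b ≥ 1 and n ≥ 0, f(a,b,n) = Σ_{k=0}^{n} g(a,0,k)·f(0,b,n−k) + f(a−1,b−1,n), where g(a,0,k) denotes the number of walks of length k from height a with steps in S satisfying h_k = 0 and h_i > 0 for all 0 ≤ i < k. -/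
open Finset

namespace Stmt6Aux

/-- extend a walk by zeros -/
def ext {n : ℕ} (s : Fin n → ℤ) (j : ℕ) : ℤ := if h : j < n then s ⟨j, h⟩ else 0

lemma height_eq {n : ℕ} (a : ℤ) (s : Fin n → ℤ) (i : ℕ) :
    height a s i = a + ∑ j ∈ Finset.range (min i n), ext s j := by
  classical
  unfold height
  congr 1
  rw [Finset.sum_filter]
  have h1 : ∀ j : Fin n, (if (j : ℕ) < i then s j else 0)
      = (fun m : ℕ => if m < i then ext s m else 0) (j : ℕ) := by
    intro j
    simp [ext, j.2]
  rw [Finset.sum_congr rfl (fun j _ => h1 j),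
    Fin.sum_univ_eq_sum_range (fun m => if m < i then ext s m else 0) n,
    ← Finset.sum_filter]
  congr 1
  ext m
  simp [Nat.lt_min, and_comm]

lemma height_eq_of_le {n : ℕ} (a : ℤ) (s : Fin n → ℤ) {i : ℕ} (hi : i ≤ n) :
    height a s i = a + ∑ j ∈ Finset.range i, ext s j := by
  rw [height_eq, min_eq_left hi]

lemma height_sub_one {n : ℕ} (a : ℤ) (s : Fin n → ℤ) (i : ℕ) :
    height (a - 1) s i = height a s i - 1 := by
  unfold height; ring

def pre {n : ℕ} (s : Fin n → ℤ) (k : ℕ) (hk : k ≤ n) : Fin k → ℤ :=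
  fun i => s ⟨i, lt_of_lt_of_le i.2 hk⟩

def suf {n : ℕ} (s : Fin n → ℤ) (k : ℕ) (hk : k ≤ n) : Fin (n - k) → ℤ :=
  fun i => s ⟨k + i, by omega⟩

lemma ext_pre {n k : ℕ} (s : Fin n → ℤ) (hk : k ≤ n) {j : ℕ} (hj : j < k) :
    ext (pre s k hk) j = ext s j := by
  simp [ext, pre, hj, lt_of_lt_of_le hj hk]

lemma ext_suf {n k : ℕ} (s : Fin n → ℤ) (hk : k ≤ n) (j : ℕ) :
    ext (suf s k hk) j = ext s (k + j) := by
  unfold ext suf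
  by_cases h : j < n - k
  · rw [dif_pos h, dif_pos (by omega)]
  · rw [dif_neg h, dif_neg (by omega)]

lemma height_pre {n k : ℕ} (a : ℤ) (s : Fin n → ℤ) (hk : k ≤ n) {i : ℕ} (hi : i ≤ k) :
    height a (pre s k hk) i = height a s i := by
  rw [height_eq_of_le _ _ hi, height_eq_of_le _ _ (le_trans hi hk)]
  congr 1
  exact Finset.sum_congr rfl fun j hj => ext_pre s hk (lt_of_lt_of_le (Finset.mem_range.mp hj) hi)

lemma height_suf {n k : ℕ} (a : ℤ) (s : Fin n → ℤ) (hk : k ≤ n) {i : ℕ} (hi : i ≤ n - k) :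
    height (height a s k) (suf s k hk) i = height a s (k + i) := by
  rw [height_eq_of_le _ _ hi, height_eq_of_le _ _ hk, height_eq_of_le _ _ (by omega : k + i ≤ n),
    Finset.sum_range_add]
  rw [add_assoc]
  congr 1
  congr 1
  exact Finset.sum_congr rfl fun j _ => ext_suf s hk j

end Stmt6Aux
namespace Stmt6Aux

noncomputable def fz {n : ℕ} (a : ℤ) (s : Fin n → ℤ) : ℕ :=
  if h : ∃ i, i ≤ n ∧ height a s i = 0 then Nat.find h else n + 1

lemma fz_le {n : ℕ} (a : ℤ) (s : Fin n → ℤ) : fz a s ≤ n + 1 := by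
  unfold fz
  split
  · next h => exact le_trans (Nat.find_spec h).1 (Nat.le_succ n)
  · exact le_rfl

lemma fz_eq_iff {n k : ℕ} (a : ℤ) (s : Fin n → ℤ) (hk : k ≤ n) :
    fz a s = k ↔ (height a s k = 0 ∧ ∀ i < k, height a s i ≠ 0) := by
  unfold fz
  split
  · next h =>
    rw [Nat.find_eq_iff]
    constructor
    · rintro ⟨⟨-, h0⟩, hmin⟩
      exact ⟨h0, fun i hi hzero => hmin i hi ⟨(by omega), hzero⟩⟩
    · rintro ⟨h0, hpos⟩
      exact ⟨⟨hk, h0⟩, fun i hi hm => hpos i hi hm.2⟩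
  · next h =>
    constructor
    · intro he; omega
    · rintro ⟨h0, -⟩
      exact absurd ⟨k, hk, h0⟩ h

lemma fz_eq_top_iff {n : ℕ} (a : ℤ) (s : Fin n → ℤ) :
    fz a s = n + 1 ↔ ∀ i ≤ n, height a s i ≠ 0 := by
  unfold fz
  split
  · next h =>
    have := (Nat.find_spec h).1
    constructor
    · intro he; omega
    · intro hall
      exact absurd (Nat.find_spec h).2 (hall _ this)
  · next h =>
    simp only [true_iff]
    intro i hi h0
    exact h ⟨i, hi, h0⟩

end Stmt6Aux


open scoped Classical in
/-- `f S a b n`: number of walks of length n from height a with steps in S that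
stay weakly above the x-axis and end at height b. -/
noncomputable def f (S : Finset ℤ) (a b : ℤ) (n : ℕ) : ℕ :=
  ((Fintype.piFinset fun _ : Fin n => S).filter
    (fun s => (∀ i ∈ Finset.range (n + 1), 0 ≤ height a s i) ∧ height a s n = b)).card

open scoped Classical in
/-- `ga0 S a k`: number of walks of length k from height a with steps in S with
h_k = 0 and h_i > 0 for all 0 ≤ i < k. -/
noncomputable def ga0 (S : Finset ℤ) (a : ℤ) (k : ℕ) : ℕ :=
  ((Fintype.piFinset fun _ : Fin k => S).filter
    (fun s => height a s k = 0 ∧ ∀ i ∈ Finset.range k, 0 < height a s i)).card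

namespace Stmt6Aux

def glue {n k : ℕ} (hk : k ≤ n) (p : Fin k → ℤ) (q : Fin (n - k) → ℤ) : Fin n → ℤ :=
  fun i => if h : (i : ℕ) < k then p ⟨i, h⟩ else q ⟨(i : ℕ) - k, by omega⟩

lemma pre_glue {n k : ℕ} (hk : k ≤ n) (p : Fin k → ℤ) (q : Fin (n - k) → ℤ) :
    pre (glue hk p q) k hk = p := by
  funext i
  simp [pre, glue, i.2]

lemma suf_glue {n k : ℕ} (hk : k ≤ n) (p : Fin k → ℤ) (q : Fin (n - k) → ℤ) :
    suf (glue hk p q) k hk = q := by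
  funext i
  have h1 : ¬ (k + (i : ℕ) < k) := by omega
  simp only [suf, glue, dif_neg h1]
  congr 1
  exact Fin.ext (by simp)

lemma glue_pre_suf {n k : ℕ} (hk : k ≤ n) (s : Fin n → ℤ) :
    glue hk (pre s k hk) (suf s k hk) = s := by
  funext i
  unfold glue pre suf
  by_cases h : (i : ℕ) < k
  · rw [dif_pos h]
  · rw [dif_neg h]
    congr 1
    exact Fin.ext (by simp; omega)

open scoped Classical in
lemma fiber_card (S : Finset ℤ) (a b : ℤ) (n k : ℕ) (hk : k ≤ n) :
    (((Fintype.piFinset fun _ : Fin n => S).filter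
      (fun s => ((∀ i ∈ Finset.range (n + 1), 0 ≤ height a s i) ∧ height a s n = b)
        ∧ fz a s = k)).card
    = ga0 S a k * f S 0 b (n - k)) := by
  unfold ga0 f
  rw [← Finset.card_product]
  apply Finset.card_nbij' (fun s => (pre s k hk, suf s k hk))
    (fun pq => glue hk pq.1 pq.2)
  · intro s hs
    simp only [Finset.mem_coe, Finset.mem_filter, Fintype.mem_piFinset] at hs
    obtain ⟨hmem, ⟨hnn, hend⟩, hfz⟩ := hs
    rw [fz_eq_iff a s hk] at hfz
    obtain ⟨h0, hpos⟩ := hfz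
    simp only [Finset.mem_coe, Finset.mem_product, Finset.mem_filter, Fintype.mem_piFinset]
    refine ⟨⟨fun i => hmem _, ?_, ?_⟩, ⟨fun i => hmem _, ?_, ?_⟩⟩
    · rw [height_pre a s hk le_rfl]; exact h0
    · intro i hi
      rw [Finset.mem_range] at hi
      rw [height_pre a s hk (le_of_lt hi)]
      refine lt_of_le_of_ne ?_ (Ne.symm (hpos i hi))
      exact hnn i (Finset.mem_range.mpr (by omega))
    · intro i hi
      rw [Finset.mem_range] at hi
      have hi' : i ≤ n - k := by omega
      have hs2 := height_suf a s hk hi'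
      rw [h0] at hs2
      rw [hs2]
      exact hnn (k + i) (Finset.mem_range.mpr (by omega))
    · rw [show (0 : ℤ) = height a s k from h0.symm, height_suf a s hk le_rfl,
        Nat.add_sub_cancel' hk]
      exact hend
  · rintro ⟨p, q⟩ hpq
    simp only [Finset.mem_coe, Finset.mem_product, Finset.mem_filter, Fintype.mem_piFinset] at hpq
    obtain ⟨⟨hpmem, hp0, hppos⟩, hqmem, hqnn, hqend⟩ := hpq
    set g := glue hk p q with hg
    have hgp : pre g k hk = p := pre_glue hk p q
    have hgq : suf g k hk = q := suf_glue hk p q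
    have hlow : ∀ i ≤ k, height a g i = height a p i := by
      intro i hi
      rw [← hgp, height_pre a g hk hi]
    have hgk : height a g k = 0 := by rw [hlow k le_rfl]; exact hp0
    have hhigh : ∀ i, k ≤ i → i ≤ n → height a g i = height 0 q (i - k) := by
      intro i h1 h2
      have : i = k + (i - k) := by omega
      rw [this, ← height_suf a g hk (by omega : i - k ≤ n - k), hgk, hgq]
      congr 1
      omega
    simp only [Finset.mem_coe, Finset.mem_filter, Fintype.mem_piFinset]
    refine ⟨?_, ⟨?_, ?_⟩, ?_⟩
    · intro i
      unfold glue
      split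
      · exact hpmem _
      · exact hqmem _
    · intro i hi
      rw [Finset.mem_range] at hi
      by_cases hik : i ≤ k
      · rw [hlow i hik]
        rcases lt_or_eq_of_le hik with h | h
        · exact le_of_lt (hppos i (Finset.mem_range.mpr h))
        · rw [h, hp0]
      · rw [hhigh i (by omega) (by omega)]
        exact hqnn _ (Finset.mem_range.mpr (by omega))
    · rw [hhigh n hk le_rfl]
      exact hqend
    · rw [fz_eq_iff a g hk]
      refine ⟨hgk, fun i hi => ?_⟩
      rw [hlow i (le_of_lt hi)]
      exact ne_of_gt (hppos i (Finset.mem_range.mpr hi))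
  · intro s _
    exact glue_pre_suf hk s
  · rintro ⟨p, q⟩ _
    exact Prod.ext (pre_glue hk p q) (suf_glue hk p q)

open scoped Classical in
lemma fiber_top (S : Finset ℤ) (a b : ℤ) (n : ℕ) :
    (((Fintype.piFinset fun _ : Fin n => S).filter
      (fun s => ((∀ i ∈ Finset.range (n + 1), 0 ≤ height a s i) ∧ height a s n = b)
        ∧ fz a s = n + 1)).card
    = f S (a - 1) (b - 1) n) := by
  unfold f
  congr 1
  ext s
  simp only [Finset.mem_filter, fz_eq_top_iff]
  rw [and_congr_right_iff]
  intro _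
  constructor
  · rintro ⟨⟨hnn, hend⟩, hne⟩
    refine ⟨fun i hi => ?_, ?_⟩
    · rw [Finset.mem_range] at hi
      rw [height_sub_one]
      have h1 := hnn i (Finset.mem_range.mpr hi)
      have h2 := hne i (by omega)
      omega
    · rw [height_sub_one, hend]
  · rintro ⟨hnn, hend⟩
    refine ⟨⟨fun i hi => ?_, ?_⟩, fun i hi => ?_⟩
    · have := hnn i hi
      rw [height_sub_one] at this
      omega
    · have := hend
      rw [height_sub_one] at this
      omega
    · have := hnn i (Finset.mem_range.mpr (by omega))
      rw [height_sub_one] at this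
      omega

end Stmt6Aux


/-- for a ≥ 1, b ≥ 1, n ≥ 0,
f(a,b,n) = Σ_{k=0}^{n} g(a,0,k)·f(0,b,n−k) + f(a−1,b−1,n). -/
theorem stmt6 (S : Finset ℤ) (a b : ℤ) (ha : 1 ≤ a) (hb : 1 ≤ b) (n : ℕ) :
    f S a b n = (∑ k ∈ Finset.range (n + 1), ga0 S a k * f S 0 b (n - k))
      + f S (a - 1) (b - 1) n := by
  classical
  have hF : f S a b n = ((Fintype.piFinset fun _ : Fin n => S).filter
      (fun s => (∀ i ∈ Finset.range (n + 1), 0 ≤ height a s i) ∧ height a s n = b)).card := rfl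
  rw [hF, Finset.card_eq_sum_card_fiberwise
      (f := fun s => Stmt6Aux.fz a s) (t := Finset.range (n + 2))
      (fun s _ => Finset.mem_range.mpr (Nat.lt_succ_of_le (Stmt6Aux.fz_le a s))),
    Finset.sum_range_succ]
  congr 1
  · apply Finset.sum_congr rfl
    intro k hk
    rw [Finset.filter_filter]
    exact Stmt6Aux.fiber_card S a b n k (Nat.lt_succ_iff.mp (Finset.mem_range.mp hk))
  · rw [Finset.filter_filter]
    exact Stmt6Aux.fiber_top S a b n
end

section
/- Fix a finite set S of integers. For all integers a ≥ 1 and n ≥ 0, f(a,0,n) = Σ_{k=0}^{n} g(a,0,k)·f(0,0,n−k), where g(a,0,k) denotes the number of walks of length k from height a with steps in S satisfying h_k = 0 and h_i > 0 for all 0 ≤ i < k. -/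
open Finset

/-- Extension of a `Fin n`-indexed walk to `ℕ` by zeros. -/
def ext' {n : ℕ} (s : Fin n → ℤ) : ℕ → ℤ := fun j => if h : j < n then s ⟨j, h⟩ else 0

lemma height_eq {n : ℕ} (a : ℤ) (s : Fin n → ℤ) {i : ℕ} (hi : i ≤ n) :
    height a s i = a + ∑ j ∈ Finset.range i, ext' s j := by
  unfold height
  congr 1
  rw [Finset.sum_filter]
  have h1 : ∀ j : Fin n, (if (j : ℕ) < i then s j else 0)
      = (fun m => if m < i then ext' s m else 0) (j : ℕ) := by
    intro j
    simp [ext', j.isLt]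
  rw [Finset.sum_congr rfl (fun j _ => h1 j),
    Fin.sum_univ_eq_sum_range (fun m => if m < i then ext' s m else 0) n,
    ← Finset.sum_filter]
  congr 1
  ext j
  simp only [Finset.mem_filter, Finset.mem_range]
  omega


lemma filter_ext {α : Type*} (s : Finset α) (p : α → Prop) (h1 h2 : DecidablePred p) :
    @Finset.filter α p h1 s = @Finset.filter α p h2 s := by
  exact congrArg (fun h => @Finset.filter α p h s) (funext fun a => Subsingleton.elim _ _)

set_option maxHeartbeats 2000000 in
/-- for a ≥ 1 and n ≥ 0, f(a,0,n) = Σ_{k=0}^{n} g(a,0,k)·f(0,0,n−k). -/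
theorem stmt7 (S : Finset ℤ) (a : ℤ) (ha : 1 ≤ a) (n : ℕ) :
    f S a 0 n = ∑ k ∈ Finset.range (n + 1), ga0 S a k * f S 0 0 (n - k) := by
  classical
  set T : Finset (Fin n → ℤ) := ((Fintype.piFinset fun _ : Fin n => S).filter
    (fun s => (∀ i ∈ Finset.range (n + 1), 0 ≤ height a s i) ∧ height a s n = 0)) with hT
  have hf : f S a 0 n = T.card := by
    rw [hT]; unfold f; exact congrArg Finset.card (filter_ext _ _ _ _)
  set Tk : ℕ → Finset (Fin n → ℤ) := fun k =>
    T.filter (fun s => height a s k = 0 ∧ ∀ i < k, 0 < height a s i) with hTk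
  have hcover : T = (Finset.range (n + 1)).biUnion Tk := by
    apply Finset.Subset.antisymm
    · intro s hs
      have hmem := hs
      rw [hT] at hmem
      simp only [Finset.mem_filter] at hmem
      obtain ⟨-, hnn, hend⟩ := hmem
      have hex : ∃ i, height a s i = 0 := ⟨n, hend⟩
      set k := Nat.find hex with hk
      have hk0 : height a s k = 0 := Nat.find_spec hex
      have hkn : k ≤ n := Nat.find_le hend
      refine Finset.mem_biUnion.mpr ⟨k, Finset.mem_range.mpr (by omega), ?_⟩
      rw [hTk]
      simp only [Finset.mem_filter]
      refine ⟨hs, hk0, fun i hi => ?_⟩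
      have hne : height a s i ≠ 0 := Nat.find_min hex hi
      have hge : 0 ≤ height a s i := hnn i (Finset.mem_range.mpr (by omega))
      omega
    · intro s hs
      obtain ⟨k, -, hks⟩ := Finset.mem_biUnion.mp hs
      exact Finset.mem_of_mem_filter s hks
  have hdisj : ∀ k ∈ Finset.range (n + 1), ∀ l ∈ Finset.range (n + 1), k ≠ l →
      Disjoint (Tk k) (Tk l) := by
    have key : ∀ k l : ℕ, k < l → Disjoint (Tk k) (Tk l) := by
      intro k l hkl
      rw [Finset.disjoint_left]
      intro s hsk hsl
      rw [hTk] at hsk hsl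
      simp only [Finset.mem_filter] at hsk hsl
      have h1 := hsk.2.1
      have h2 := hsl.2.2 k hkl
      omega
    intro k _ l _ hkl
    rcases lt_or_gt_of_ne hkl with h | h
    · exact key k l h
    · exact (key l k h).symm
  rw [hf, hcover, Finset.card_biUnion hdisj]
  apply Finset.sum_congr rfl
  intro k hkmem
  have hk : k ≤ n := by
    have := Finset.mem_range.mp hkmem; omega
  -- bijection Tk k ≃ G ×ˢ F
  set G : Finset (Fin k → ℤ) := ((Fintype.piFinset fun _ : Fin k => S).filter
    (fun s => height a s k = 0 ∧ ∀ i ∈ Finset.range k, 0 < height a s i)) with hG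
  set F : Finset (Fin (n - k) → ℤ) := ((Fintype.piFinset fun _ : Fin (n - k) => S).filter
    (fun s => (∀ i ∈ Finset.range (n - k + 1), 0 ≤ height (0 : ℤ) s i)
      ∧ height (0 : ℤ) s (n - k) = 0)) with hF
  have hga : ga0 S a k = G.card := by
    rw [hG]; unfold ga0; exact congrArg Finset.card (filter_ext _ _ _ _)
  have hfF : f S 0 0 (n - k) = F.card := by
    rw [hF]; unfold f; exact congrArg Finset.card (filter_ext _ _ _ _)
  rw [hga, hfF, ← Finset.card_product]
  refine Finset.card_bij'
    (fun s _ => ((fun j : Fin k => s ⟨(j : ℕ), by omega⟩),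
      (fun j : Fin (n - k) => s ⟨k + (j : ℕ), by omega⟩)))
    (fun p _ => fun j : Fin n =>
      if h : (j : ℕ) < k then p.1 ⟨(j : ℕ), h⟩ else p.2 ⟨(j : ℕ) - k, by omega⟩)
    ?_ ?_ ?_ ?_
  · -- i maps into G ×ˢ F
    intro s hs
    rw [hTk] at hs
    simp only [Finset.mem_filter] at hs
    obtain ⟨hsT, hk0, hpos⟩ := hs
    rw [hT] at hsT
    simp only [Finset.mem_filter] at hsT
    obtain ⟨hsS, hnn, hend⟩ := hsT
    have hsS' : ∀ j, s j ∈ S := fun j => Fintype.mem_piFinset.mp hsS j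
    set p : Fin k → ℤ := fun j => s ⟨(j : ℕ), by omega⟩ with hp
    set q : Fin (n - k) → ℤ := fun j => s ⟨k + (j : ℕ), by omega⟩ with hq
    have hph : ∀ i ≤ k, height a p i = height a s i := by
      intro i hi
      rw [height_eq a p hi, height_eq a s (hi.trans hk)]
      congr 1
      apply Finset.sum_congr rfl
      intro j hj
      have hj' : j < i := Finset.mem_range.mp hj
      simp only [ext']
      rw [dif_pos (by omega : j < k), dif_pos (by omega : j < n)]
    have hqh : ∀ i ≤ n - k, height (0 : ℤ) q i = height a s (k + i) := by
      intro i hi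
      rw [height_eq (0 : ℤ) q hi, height_eq a s (by omega : k + i ≤ n),
        Finset.sum_range_add]
      have h0 : a + ∑ j ∈ Finset.range k, ext' s j = 0 := by
        rw [← height_eq a s hk]; exact hk0
      have hc : ∑ j ∈ Finset.range i, ext' q j
          = ∑ j ∈ Finset.range i, ext' s (k + j) := by
        apply Finset.sum_congr rfl
        intro j hj
        have hj' : j < i := Finset.mem_range.mp hj
        simp only [ext']
        rw [dif_pos (by omega : j < n - k), dif_pos (by omega : k + j < n)]
      rw [hc]; linarith
    rw [Finset.mem_product]
    constructor
    · rw [hG]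
      simp only [Finset.mem_filter]
      refine ⟨Fintype.mem_piFinset.mpr fun j => hsS' _, ?_, fun i hi => ?_⟩
      · rw [hph k le_rfl]; exact hk0
      · rw [hph i (le_of_lt (Finset.mem_range.mp hi))]
        exact hpos i (Finset.mem_range.mp hi)
    · rw [hF]
      simp only [Finset.mem_filter]
      refine ⟨Fintype.mem_piFinset.mpr fun j => hsS' _, fun i hi => ?_, ?_⟩
      · have hi' : i ≤ n - k := by have := Finset.mem_range.mp hi; omega
        rw [hqh i hi']
        exact hnn (k + i) (Finset.mem_range.mpr (by omega))
      · rw [hqh (n - k) le_rfl]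
        have : k + (n - k) = n := by omega
        rw [this]; exact hend
  · -- j maps into Tk k
    intro p hp
    rw [Finset.mem_product] at hp
    obtain ⟨hpG, hpF⟩ := hp
    rw [hG] at hpG
    simp only [Finset.mem_filter] at hpG
    rw [hF] at hpF
    simp only [Finset.mem_filter] at hpF
    obtain ⟨hpS, hpk0, hppos⟩ := hpG
    obtain ⟨hqS, hqnn, hqend⟩ := hpF
    set s : Fin n → ℤ := fun j =>
      if h : (j : ℕ) < k then p.1 ⟨(j : ℕ), h⟩ else p.2 ⟨(j : ℕ) - k, by omega⟩ with hsdef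
    have hsS : ∀ j, s j ∈ S := by
      intro j
      rw [hsdef]
      dsimp only
      split
      · exact Fintype.mem_piFinset.mp hpS _
      · exact Fintype.mem_piFinset.mp hqS _
    have hs1 : ∀ i ≤ k, height a s i = height a p.1 i := by
      intro i hi
      rw [height_eq a s (hi.trans hk), height_eq a p.1 hi]
      congr 1
      apply Finset.sum_congr rfl
      intro j hj
      have hj' : j < i := Finset.mem_range.mp hj
      simp only [ext', hsdef]
      rw [dif_pos (by omega : j < n), dif_pos (by omega : j < k)]
      rw [dif_pos (by omega : j < k)]
    have hs2 : ∀ m ≤ n - k, height a s (k + m) = height (0 : ℤ) p.2 m := by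
      intro m hm
      rw [height_eq a s (by omega : k + m ≤ n), height_eq (0 : ℤ) p.2 hm,
        Finset.sum_range_add]
      have h0 : a + ∑ j ∈ Finset.range k, ext' s j = 0 := by
        rw [← height_eq a s hk, hs1 k le_rfl]; exact hpk0
      have hc : ∑ j ∈ Finset.range m, ext' s (k + j)
          = ∑ j ∈ Finset.range m, ext' p.2 j := by
        apply Finset.sum_congr rfl
        intro j hj
        have hj' : j < m := Finset.mem_range.mp hj
        simp only [ext', hsdef]
        rw [dif_pos (by omega : k + j < n), dif_neg (by omega : ¬ (k + j < k))]
        rw [dif_pos (by omega : j < n - k)]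
        exact congrArg p.2 (Fin.ext (show k + j - k = j by omega))
      rw [hc]; linarith
    show s ∈ Tk k
    rw [hTk]
    simp only [Finset.mem_filter]
    refine ⟨?_, ?_, ?_⟩
    · rw [hT]
      simp only [Finset.mem_filter]
      refine ⟨Fintype.mem_piFinset.mpr hsS, ?_, ?_⟩
      · intro i hi
        have hi' : i ≤ n := by have := Finset.mem_range.mp hi; omega
        rcases le_or_gt i k with h | h
        · rw [hs1 i h]
          rcases lt_or_eq_of_le h with h' | h'
          · exact le_of_lt (hppos i (Finset.mem_range.mpr h'))
          · rw [h']; rw [hpk0]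
        · have : i = k + (i - k) := by omega
          rw [this, hs2 (i - k) (by omega)]
          exact hqnn (i - k) (Finset.mem_range.mpr (by omega))
      · have h2 := hs2 (n - k) le_rfl
        rw [show k + (n - k) = n from by omega] at h2
        rw [h2]; exact hqend
    · rw [hs1 k le_rfl]; exact hpk0
    · intro i hi
      rw [hs1 i (le_of_lt hi)]
      exact hppos i (Finset.mem_range.mpr hi)
  · -- left inverse
    intro s _
    funext j
    dsimp only
    split
    · rfl
    · exact congrArg s (Fin.ext (by simp; omega))
  · -- right inverse
    intro p _
    apply Prod.ext
    · funext j
      dsimp only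
      rw [dif_pos j.isLt]
    · funext j
      dsimp only
      rw [dif_neg (by omega : ¬ (k + (j : ℕ) < k))]
      exact congrArg p.2 (Fin.ext (by simp))
end

section
/- For every integer n ≥ 2, the polynomial identity Σ_{w} q^{area(w)} = q^{n−1} · Σ_{v} q^{area(v)} holds in ℤ[q], where the first sum is over all strict Dyck paths w of length n and the second sum is over all Dyck paths v of length n − 2. -/
open Finset Polynomial

/-- The area under a path: the sum of its intermediate heights h_1 + ⋯ + h_{n−1}
(a natural number, since heights of Dyck paths are nonnegative). -/
def area {n : ℕ} (s : Fin n → ℤ) : ℕ :=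
  (∑ i ∈ Finset.Ico 1 n, height 0 s i).toNat

open scoped Classical in
/-- Dyck paths of length `n`. -/
noncomputable def dyckPaths (n : ℕ) : Finset (Fin n → ℤ) :=
  (Fintype.piFinset fun _ => ({1, -1} : Finset ℤ)).filter
    (fun s => (∀ i ∈ Finset.Icc 1 n, 0 ≤ height 0 s i) ∧ height 0 s n = 0)

open scoped Classical in
/-- Strict Dyck paths of length `n`: Dyck paths with h_i > 0 for all 0 < i < n. -/
noncomputable def strictDyckPaths (n : ℕ) : Finset (Fin n → ℤ) :=
  (dyckPaths n).filter (fun s => ∀ i ∈ Finset.Ioo 0 n, 0 < height 0 s i)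

lemma height_zero {n : ℕ} (s : Fin n → ℤ) : height 0 s 0 = 0 := by
  simp [height]

lemma height_succ {n : ℕ} (s : Fin n → ℤ) {i : ℕ} (hi : i < n) :
    height 0 s (i + 1) = height 0 s i + s ⟨i, hi⟩ := by
  unfold height
  have h : Finset.univ.filter (fun j : Fin n => (j : ℕ) < i + 1)
      = insert ⟨i, hi⟩ (Finset.univ.filter (fun j : Fin n => (j : ℕ) < i)) := by
    ext j
    simp only [Finset.mem_filter, Finset.mem_univ, true_and, Finset.mem_insert, Fin.ext_iff]
    omega
  rw [h, Finset.sum_insert (by simp)]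
  ring

lemma mem_dyckPaths {n : ℕ} {s : Fin n → ℤ} :
    s ∈ dyckPaths n ↔ (∀ i, s i = 1 ∨ s i = -1) ∧
      (∀ i ∈ Finset.Icc 1 n, 0 ≤ height 0 s i) ∧ height 0 s n = 0 := by
  classical
  simp [dyckPaths, Fintype.mem_piFinset, and_assoc]

lemma mem_strictDyckPaths {n : ℕ} {s : Fin n → ℤ} :
    s ∈ strictDyckPaths n ↔ s ∈ dyckPaths n ∧ ∀ i ∈ Finset.Ioo 0 n, 0 < height 0 s i := by
  classical
  simp [strictDyckPaths]

/-- Extend a path of length `m` to one of length `m+2` by adding an up-step in front and a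
down-step at the end. -/
def extPath (m : ℕ) (v : Fin m → ℤ) : Fin (m + 2) → ℤ := fun i =>
  if h0 : (i : ℕ) = 0 then 1
  else if h1 : (i : ℕ) = m + 1 then -1
  else v ⟨(i : ℕ) - 1, by have := i.isLt; omega⟩

/-- Restrict a path of length `m+2` to the middle `m` steps. -/
def resPath (m : ℕ) (w : Fin (m + 2) → ℤ) : Fin m → ℤ :=
  fun j => w ⟨(j : ℕ) + 1, by have := j.isLt; omega⟩

lemma extPath_zero (m : ℕ) (v : Fin m → ℤ) : extPath m v ⟨0, by omega⟩ = 1 := by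
  simp [extPath]

lemma extPath_last (m : ℕ) (v : Fin m → ℤ) : extPath m v ⟨m + 1, by omega⟩ = -1 := by
  unfold extPath
  rw [dif_neg (by simp), dif_pos rfl]

lemma extPath_mid (m : ℕ) (v : Fin m → ℤ) (j : ℕ) (hj : j < m) :
    extPath m v ⟨j + 1, by omega⟩ = v ⟨j, hj⟩ := by
  unfold extPath
  rw [dif_neg (by simp), dif_neg (by simp; omega)]
  rfl

lemma height_extPath (m : ℕ) (v : Fin m → ℤ) :
    ∀ i ≤ m, height 0 (extPath m v) (i + 1) = 1 + height 0 v i := by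
  intro i hi
  induction i with
  | zero =>
      rw [height_succ _ (by omega : 0 < m + 2)]
      rw [height_zero, height_zero, extPath_zero]
      ring
  | succ k ih =>
      rw [height_succ _ (by omega : k + 1 < m + 2),
        height_succ v (by omega : k < m), ih (by omega),
        extPath_mid m v k (by omega)]
      ring

lemma height_resPath (m : ℕ) (w : Fin (m + 2) → ℤ) :
    ∀ i ≤ m, height 0 (resPath m w) i = height 0 w (i + 1) - w ⟨0, by omega⟩ := by
  intro i hi
  induction i with
  | zero =>
      rw [height_zero, height_succ _ (by omega : 0 < m + 2), height_zero]
      ring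
  | succ k ih =>
      rw [height_succ _ (by omega : k < m), height_succ _ (by omega : k + 1 < m + 2),
        ih (by omega)]
      have : resPath m w ⟨k, by omega⟩ = w ⟨k + 1, by omega⟩ := rfl
      rw [this]
      ring

lemma strict_first (m : ℕ) {w : Fin (m + 2) → ℤ} (hw : w ∈ strictDyckPaths (m + 2)) :
    w ⟨0, by omega⟩ = 1 := by
  obtain ⟨hd, hpos⟩ := mem_strictDyckPaths.mp hw
  obtain ⟨hsteps, -, -⟩ := mem_dyckPaths.mp hd
  have h1 : 0 < height 0 w 1 := hpos 1 (by simp)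
  rw [height_succ _ (by omega : 0 < m + 2), height_zero] at h1
  rcases hsteps ⟨0, by omega⟩ with h | h
  · exact h
  · rw [h] at h1; omega

lemma strict_top (m : ℕ) {w : Fin (m + 2) → ℤ} (hw : w ∈ strictDyckPaths (m + 2)) :
    w ⟨m + 1, by omega⟩ = -1 ∧ height 0 w (m + 1) = 1 := by
  obtain ⟨hd, hpos⟩ := mem_strictDyckPaths.mp hw
  obtain ⟨hsteps, -, hend⟩ := mem_dyckPaths.mp hd
  have h1 : 0 < height 0 w (m + 1) := hpos (m + 1) (by simp)
  have h2 : height 0 w (m + 2) = height 0 w (m + 1) + w ⟨m + 1, by omega⟩ :=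
    height_succ _ (by omega)
  rw [hend] at h2
  rcases hsteps ⟨m + 1, by omega⟩ with h | h
  · rw [h] at h2; omega
  · rw [h] at h2; exact ⟨h, by omega⟩

lemma extPath_mem (m : ℕ) {v : Fin m → ℤ} (hv : v ∈ dyckPaths m) :
    extPath m v ∈ strictDyckPaths (m + 2) := by
  obtain ⟨hsteps, hh, hend⟩ := mem_dyckPaths.mp hv
  have hpos : ∀ i ∈ Finset.Ioo 0 (m + 2), 0 < height 0 (extPath m v) i := by
    intro i hi
    simp only [Finset.mem_Ioo] at hi
    obtain ⟨k, rfl⟩ : ∃ k, i = k + 1 := ⟨i - 1, by omega⟩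
    rw [height_extPath m v k (by omega)]
    rcases Nat.eq_zero_or_pos k with rfl | hk
    · rw [height_zero]; omega
    · have := hh k (by simp; omega)
      omega
  have hht : height 0 (extPath m v) (m + 2) = 0 := by
    rw [height_succ _ (by omega : m + 1 < m + 2), height_extPath m v m le_rfl, extPath_last,
      hend]
    ring
  refine mem_strictDyckPaths.mpr ⟨mem_dyckPaths.mpr ⟨?_, ?_, hht⟩, hpos⟩
  · intro i
    unfold extPath
    split
    · left; rfl
    · split
      · right; rfl
      · exact hsteps _
  · intro i hi
    simp only [Finset.mem_Icc] at hi
    rcases Nat.lt_or_ge i (m + 2) with h | h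
    · exact le_of_lt (hpos i (by simp; omega))
    · have : i = m + 2 := by omega
      rw [this, hht]

lemma resPath_mem (m : ℕ) {w : Fin (m + 2) → ℤ} (hw : w ∈ strictDyckPaths (m + 2)) :
    resPath m w ∈ dyckPaths m := by
  obtain ⟨hd, hpos⟩ := mem_strictDyckPaths.mp hw
  obtain ⟨hsteps, -, -⟩ := mem_dyckPaths.mp hd
  have hw0 := strict_first m hw
  have hres : ∀ i ≤ m, height 0 (resPath m w) i = height 0 w (i + 1) - 1 := by
    intro i hi
    rw [height_resPath m w i hi, hw0]
  refine mem_dyckPaths.mpr ⟨fun j => hsteps _, ?_, ?_⟩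
  · intro i hi
    simp only [Finset.mem_Icc] at hi
    rw [hres i hi.2]
    have := hpos (i + 1) (by simp; omega)
    omega
  · rw [hres m le_rfl, (strict_top m hw).2]
    ring

lemma resPath_extPath (m : ℕ) (v : Fin m → ℤ) : resPath m (extPath m v) = v := by
  funext j
  have : resPath m (extPath m v) j = extPath m v ⟨(j : ℕ) + 1, by have := j.isLt; omega⟩ := rfl
  rw [this, extPath_mid m v j j.isLt]

lemma extPath_resPath (m : ℕ) {w : Fin (m + 2) → ℤ} (hw : w ∈ strictDyckPaths (m + 2)) :
    extPath m (resPath m w) = w := by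
  funext i
  unfold extPath
  split
  · rename_i h0
    have hi : i = ⟨0, by omega⟩ := Fin.ext h0
    rw [hi]
    exact (strict_first m hw).symm
  · split
    · rename_i h0 h1
      have hi : i = ⟨m + 1, by omega⟩ := Fin.ext h1
      rw [hi]
      exact (strict_top m hw).1.symm
    · rename_i h0 h1
      show w ⟨(i : ℕ) - 1 + 1, by have := i.isLt; omega⟩ = w i
      congr 1
      exact Fin.ext (show (i : ℕ) - 1 + 1 = (i : ℕ) by omega)

lemma area_extPath (m : ℕ) {v : Fin m → ℤ} (hv : v ∈ dyckPaths m) :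
    area (extPath m v) = m + 1 + area v := by
  obtain ⟨hsteps, hh, hend⟩ := mem_dyckPaths.mp hv
  have key : ∀ i ∈ Finset.Ico 1 (m + 2),
      height 0 (extPath m v) i = 1 + height 0 v (i - 1) := by
    intro i hi
    simp only [Finset.mem_Ico] at hi
    obtain ⟨k, rfl⟩ : ∃ k, i = k + 1 := ⟨i - 1, by omega⟩
    rw [height_extPath m v k (by omega)]
    simp
  have h1 : (∑ i ∈ Finset.Ico 1 (m + 2), height 0 (extPath m v) i)
      = (m + 1 : ℤ) + ∑ i ∈ Finset.Ico 1 m, height 0 v i := by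
    rw [Finset.sum_congr rfl key, Finset.sum_add_distrib]
    congr 1
    · simp
    · rw [Finset.sum_Ico_eq_sum_range]
      simp only [Nat.add_sub_cancel_left, show m + 2 - 1 = m + 1 from rfl]
      rw [Finset.range_eq_Ico]
      refine (Finset.sum_subset ?_ ?_).symm
      · intro k hk
        simp only [Finset.mem_Ico] at *
        omega
      · intro k hk hk'
        simp only [Finset.mem_Ico] at hk hk'
        have : k = 0 ∨ k = m := by omega
        rcases this with rfl | rfl
        · exact height_zero v
        · exact hend
  have hS : 0 ≤ ∑ i ∈ Finset.Ico 1 m, height 0 v i := by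
    refine Finset.sum_nonneg fun i hi => ?_
    simp only [Finset.mem_Ico] at hi
    exact hh i (by simp; omega)
  unfold area
  rw [h1]
  omega

theorem stmt12_aux (m : ℕ) :
    (∑ w ∈ strictDyckPaths (m + 2), (X : ℤ[X]) ^ area w)
      = X ^ (m + 1) * ∑ v ∈ dyckPaths m, (X : ℤ[X]) ^ area v := by
  rw [Finset.mul_sum]
  simp_rw [← pow_add]
  refine (Finset.sum_nbij' (i := fun v => extPath m v) (j := fun w => resPath m w)
    ?_ ?_ ?_ ?_ ?_).symm
  · intro v hv; exact extPath_mem m hv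
  · intro w hw; exact resPath_mem m hw
  · intro v hv; exact resPath_extPath m v
  · intro w hw; exact extPath_resPath m hw
  · intro v hv
    rw [area_extPath m hv]

/-- for n ≥ 2, in ℤ[q],
Σ_{w strict Dyck of length n} q^{area(w)} = q^{n−1} · Σ_{v Dyck of length n−2} q^{area(v)}. -/
theorem stmt12 (n : ℕ) (hn : 2 ≤ n) :
    (∑ w ∈ strictDyckPaths n, (X : ℤ[X]) ^ area w)
      = X ^ (n - 1) * ∑ v ∈ dyckPaths (n - 2), (X : ℤ[X]) ^ area v := by
  obtain ⟨m, rfl⟩ : ∃ m, n = m + 2 := ⟨n - 2, by omega⟩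
  exact stmt12_aux m
end

section
/- For n ≥ 0 let M_n(q) = Σ_{w} q^{area(w)} ∈ ℤ[q], the sum over all Motzkin paths w of length n. Then for every n ≥ 1, M_n(q) = M_{n−1}(q) + Σ_{k=2}^{n} q^{k−1} · M_{k−2}(q) · M_{n−k}(q), and M_0(q) = 1. -/
open Finset Polynomial

/-- `M n = Σ_w q^{area(w)}` over Motzkin paths w of length n, as a polynomial in ℤ[q]. -/
noncomputable def M (n : ℕ) : ℤ[X] :=
  ∑ w ∈ motzkinPaths n, (X : ℤ[X]) ^ area w

open scoped Classical

namespace MotzkinAux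

/-- height after i steps of a list path -/
def ht (l : List ℤ) (i : ℕ) : ℤ := (l.take i).sum

/-- integer area of a list path -/
def ari (l : List ℤ) : ℤ := ∑ i ∈ Finset.Ico 1 l.length, ht l i

/-- validity of a Motzkin list -/
def ok (l : List ℤ) : Prop :=
  (∀ x ∈ l, x = 1 ∨ x = 0 ∨ x = -1) ∧ (∀ i, 0 ≤ ht l i) ∧ l.sum = 0

noncomputable def mL (n : ℕ) : Finset (List ℤ) := (motzkinPaths n).image List.ofFn

@[simp] lemma ht_zero (l : List ℤ) : ht l 0 = 0 := by simp [ht]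

@[simp] lemma ht_nil (i : ℕ) : ht [] i = 0 := by simp [ht]

lemma ht_cons_succ (x : ℤ) (l : List ℤ) (i : ℕ) : ht (x :: l) (i+1) = x + ht l i := by
  simp [ht, List.take_succ_cons]

lemma ht_large {l : List ℤ} {i : ℕ} (h : l.length ≤ i) : ht l i = l.sum := by
  rw [ht, List.take_of_length_le h]

lemma ht_succ_get {l : List ℤ} {i : ℕ} (h : i < l.length) : ht l (i+1) = ht l i + l[i] :=
  List.sum_take_succ l i h

lemma ht_append (u w : List ℤ) (m : ℕ) : ht (u ++ w) (u.length + m) = u.sum + ht w m := by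
  rw [ht, List.take_length_add_append, List.sum_append, ht]

lemma ht_append_le (u w : List ℤ) {i : ℕ} (h : i ≤ u.length) : ht (u ++ w) i = ht u i := by
  rw [ht, ht, List.take_append_of_le_length h]

lemma ht_take {l : List ℤ} {i k : ℕ} (h : i ≤ k) : ht (l.take k) i = ht l i := by
  rw [ht, ht, List.take_take, min_eq_left h]

lemma ht_drop {l : List ℤ} {i : ℕ} (h : i ≤ l.length) (j : ℕ) :
    ht l (i + j) = ht l i + ht (l.drop i) j := by
  rw [ht, ht, ht]
  conv_lhs => rw [← List.take_append_drop i l]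
  rw [show i + j = (l.take i).length + j by rw [List.length_take]; omega]
  rw [List.take_length_add_append, List.sum_append]

lemma ari_nonneg {l : List ℤ} (h : ∀ i, 0 ≤ ht l i) : 0 ≤ ari l :=
  Finset.sum_nonneg fun i _ => h i

lemma sum_range_len (l : List ℤ) : ∑ i ∈ Finset.range l.length, ht l i = ari l := by
  rcases Nat.eq_zero_or_pos l.length with h | h
  · simp [ari, h]
  · rw [ari, ← Nat.Ico_zero_eq_range, Finset.sum_eq_sum_Ico_succ_bot h, ht_zero, zero_add]

lemma ari_cons_zero (t : List ℤ) : ari ((0 : ℤ) :: t) = ari t := by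
  rw [ari, List.length_cons, Finset.sum_Ico_eq_sum_range]
  simp only [Nat.add_sub_cancel]
  rw [← sum_range_len t]
  apply Finset.sum_congr rfl
  intro i _
  rw [show 1 + i = i + 1 by omega, ht_cons_succ, zero_add]

lemma sum_range_add' (F : ℕ → ℤ) (m b : ℕ) :
    ∑ i ∈ Finset.range (m + b), F i
      = ∑ i ∈ Finset.range m, F i + ∑ j ∈ Finset.range b, F (m + j) := by
  induction b with
  | zero => simp
  | succ b ih =>
    rw [show m + (b+1) = (m+b)+1 from rfl, Finset.sum_range_succ, Finset.sum_range_succ, ih]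
    ring

lemma ht_glue_low (u v : List ℤ) {i : ℕ} (h : i ≤ u.length) :
    ht (1 :: (u ++ (-1) :: v)) (i + 1) = 1 + ht u i := by
  rw [ht_cons_succ, ht_append_le _ _ h]

lemma ht_glue_high (u v : List ℤ) (hus : u.sum = 0) (j : ℕ) :
    ht (1 :: (u ++ (-1) :: v)) (u.length + 2 + j) = ht v j := by
  rw [show u.length + 2 + j = (u.length + (1 + j)) + 1 by ring, ht_cons_succ,
    ht_append, hus, show 1 + j = j + 1 by ring, ht_cons_succ]
  ring

lemma ari_glue (u v : List ℤ) (hus : u.sum = 0) :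
    ari (1 :: (u ++ (-1) :: v)) = (u.length + 1 : ℤ) + ari u + ari v := by
  rw [ari]
  rw [show (1 :: (u ++ (-1) :: v)).length = ((u.length + 1) + v.length) + 1 by simp; omega]
  rw [Finset.sum_Ico_eq_sum_range]
  rw [show ((u.length + 1) + v.length) + 1 - 1 = (u.length + 1) + v.length by omega]
  rw [sum_range_add']
  have h1 : ∑ i ∈ Finset.range (u.length + 1), ht (1 :: (u ++ (-1) :: v)) (1 + i)
      = (u.length + 1 : ℤ) + ari u := by
    have : ∀ i ∈ Finset.range (u.length + 1),
        ht (1 :: (u ++ (-1) :: v)) (1 + i) = 1 + ht u i := by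
      intro i hi
      rw [show 1 + i = i + 1 by ring, ht_glue_low]
      simp at hi; omega
    rw [Finset.sum_congr rfl this, Finset.sum_add_distrib, Finset.sum_const,
      Finset.card_range, Finset.sum_range_succ, sum_range_len,
      ht_large (le_refl u.length), hus]
    ring
  have h2 : ∀ j ∈ Finset.range v.length,
      ht (1 :: (u ++ (-1) :: v)) (1 + ((u.length + 1) + j)) = ht v j := by
    intro j _
    rw [show 1 + ((u.length + 1) + j) = u.length + 2 + j by ring, ht_glue_high u v hus]
  rw [h1, Finset.sum_congr rfl h2, sum_range_len]

end MotzkinAux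
namespace MotzkinAux

noncomputable def fr (l : List ℤ) : ℕ :=
  if h : ∃ i, 0 < i ∧ ht l i = 0 then Nat.find h else 0

lemma fr_facts {l : List ℤ} (hex : ∃ i, 0 < i ∧ ht l i = 0) :
    0 < fr l ∧ ht l (fr l) = 0 ∧ ∀ i, 0 < i → i < fr l → ht l i ≠ 0 := by
  rw [fr, dif_pos hex]
  exact ⟨(Nat.find_spec hex).1, (Nat.find_spec hex).2,
    fun i h1 h2 h3 => Nat.find_min hex h2 ⟨h1, h3⟩⟩

lemma fr_le {l : List ℤ} (hex : ∃ i, 0 < i ∧ ht l i = 0) {m : ℕ} (h0 : 0 < m)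
    (hm : ht l m = 0) : fr l ≤ m := by
  rw [fr, dif_pos hex]; exact Nat.find_le ⟨h0, hm⟩

/-- translation: Fin-heights equal list-heights -/
lemma height_eq {n : ℕ} (s : Fin n → ℤ) : ∀ i, height 0 s i = ht (List.ofFn s) i := by
  intro i
  induction i with
  | zero => simp [height, ht]
  | succ i ih =>
    rcases lt_or_ge i n with h | h
    · have h1 : ht (List.ofFn s) (i+1) = ht (List.ofFn s) i + s ⟨i, h⟩ := by
        have := ht_succ_get (l := List.ofFn s) (i := i) (by simpa using h)
        simpa using this
      have h2 : Finset.univ.filter (fun j : Fin n => (j : ℕ) < i + 1)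
          = insert ⟨i, h⟩ (Finset.univ.filter (fun j : Fin n => (j : ℕ) < i)) := by
        ext j
        simp [Fin.ext_iff]
        omega
      rw [h1, ← ih, height, height, h2, Finset.sum_insert (by simp)]
      ring
    · have h1 : ht (List.ofFn s) (i+1) = ht (List.ofFn s) i := by
        rw [ht_large (by simpa using by omega : (List.ofFn s).length ≤ i + 1),
          ht_large (by simpa using h)]
      have h2 : Finset.univ.filter (fun j : Fin n => (j : ℕ) < i + 1)
          = Finset.univ.filter (fun j : Fin n => (j : ℕ) < i) := by
        ext j
        simp only [Finset.mem_filter, Finset.mem_univ, true_and]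
        have := j.2
        omega
      rw [h1, ← ih, height, height, h2]

lemma area_eq {n : ℕ} (s : Fin n → ℤ) : area s = (ari (List.ofFn s)).toNat := by
  rw [area, ari, List.length_ofFn]
  congr 1
  exact Finset.sum_congr rfl fun i _ => height_eq s i

lemma mem_mL {n : ℕ} {l : List ℤ} : l ∈ mL n ↔ l.length = n ∧ ok l := by
  constructor
  · rintro hl
    obtain ⟨w, hw, rfl⟩ := Finset.mem_image.mp hl
    simp only [motzkinPaths, Finset.mem_filter] at hw
    obtain ⟨hpi, hge, h0⟩ := hw
    rw [Fintype.mem_piFinset] at hpi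
    refine ⟨by simp, ?_, ?_, ?_⟩
    · intro x hx
      rw [List.mem_ofFn] at hx
      obtain ⟨j, rfl⟩ := hx
      have := hpi j
      simpa using this
    · intro i
      rcases le_or_gt i n with h | h
      · rcases Nat.eq_zero_or_pos i with rfl | hpos
        · simp
        · rw [← height_eq]
          exact hge i (Finset.mem_Icc.mpr ⟨hpos, h⟩)
      · rw [ht_large (by simpa using by omega : (List.ofFn w).length ≤ i)]
        have : (List.ofFn w).sum = ht (List.ofFn w) n :=
          (ht_large (by simp)).symm
        rw [this, ← height_eq, h0]
    · have : (List.ofFn w).sum = ht (List.ofFn w) n := (ht_large (by simp)).symm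
      rw [this, ← height_eq, h0]
  · rintro ⟨hlen, he, hnn, hs⟩
    rw [mL, Finset.mem_image]
    refine ⟨fun j : Fin n => l[(j : ℕ)]'(by omega), ?_, ?_⟩
    · simp only [motzkinPaths, Finset.mem_filter]
      have hofn : List.ofFn (fun j : Fin n => l[(j : ℕ)]'(by omega)) = l := by
        apply List.ext_getElem
        · simp [hlen]
        · intro i h1 h2
          simp
      refine ⟨?_, ?_, ?_⟩
      · rw [Fintype.mem_piFinset]
        intro j
        have := he (l[(j : ℕ)]'(by omega)) (List.getElem_mem _)
        simpa using this
      · intro i _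
        rw [height_eq, hofn]
        exact hnn i
      · rw [height_eq, hofn, ht_large (by omega)]
        exact hs
    · apply List.ext_getElem
      · simp [hlen]
      · intro i h1 h2
        simp

lemma M_eq (n : ℕ) : M n = ∑ l ∈ mL n, (X : ℤ[X]) ^ (ari l).toNat := by
  rw [M, mL, Finset.sum_image (fun a _ b _ h => List.ofFn_injective h)]
  exact Finset.sum_congr rfl fun w _ => by rw [area_eq]

end MotzkinAux
namespace MotzkinAux

/-- The structure of a Motzkin list starting with an up-step, in terms of its
first return time `k`. -/
lemma decomp {n k : ℕ} (hk2 : 2 ≤ k) (hkn : k ≤ n) {l : List ℤ}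
    (hlen : l.length = n)
    (he : ∀ x ∈ l, x = 1 ∨ x = 0 ∨ x = -1)
    (hnn : ∀ i, 0 ≤ ht l i)
    (h1 : ht l 1 = 1)
    (hk0 : ht l k = 0)
    (hs : l.sum = 0)
    (hpos : ∀ i, 0 < i → i < k → ht l i ≠ 0) :
    l = 1 :: (l.tail.take (k-2) ++ (-1) :: l.drop k) ∧
      (l.tail.take (k-2)).length = k - 2 ∧ (l.drop k).length = n - k ∧
      ok (l.tail.take (k-2)) ∧ ok (l.drop k) := by
  -- l is nonempty, l = x :: t with x = 1
  obtain ⟨x, t, rfl⟩ : ∃ x t, l = x :: t := by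
    cases l with
    | nil => simp at hlen; omega
    | cons x t => exact ⟨x, t, rfl⟩
  have hx : x = 1 := by
    have := ht_cons_succ x t 0
    rw [ht_zero, add_zero] at this
    rw [this] at h1
    exact h1
  subst hx
  set l : List ℤ := 1 :: t with hl
  have htail : l.tail = t := rfl
  have hlt : t.length = n - 1 := by simp [hl] at hlen; omega
  have hstep : ∀ i, ht l (i+1) = 1 + ht t i := fun i => ht_cons_succ 1 t i
  -- positivity below k
  have hposk : ∀ i, 0 < i → i < k → 1 ≤ ht l i := by
    intro i h1' h2'
    have := hnn i
    have := hpos i h1' h2'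
    omega
  -- the step at position k-1 is -1 and height there is 1
  have hklt : k - 1 < l.length := by omega
  have hstepk : ht l k = ht l (k-1) + l[k-1] := by
    have := ht_succ_get (l := l) (i := k - 1) hklt
    rw [show k - 1 + 1 = k by omega] at this
    exact this
  have hmem : l[k-1] = 1 ∨ l[k-1] = 0 ∨ l[k-1] = -1 := he _ (List.getElem_mem hklt)
  have hhk1 : ht l (k-1) = 1 ∧ l[k-1] = -1 := by
    have := hposk (k-1) (by omega) (by omega)
    rcases hmem with h | h | h <;> omega
  -- heights of u
  have hu_len : (t.take (k-2)).length = k - 2 := by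
    rw [List.length_take]; omega
  have hu_ht : ∀ i, i ≤ k - 2 → ht (t.take (k-2)) i = ht l (i+1) - 1 := by
    intro i hi
    rw [ht_take hi, hstep i]
    ring
  have hu_sum : (t.take (k-2)).sum = 0 := by
    have := hu_ht (k-2) le_rfl
    rw [show k - 2 + 1 = k - 1 by omega, hhk1.1] at this
    have h2 := ht_large (le_of_eq hu_len)
    omega
  have hok_u : ok (t.take (k-2)) := by
    refine ⟨fun y hy => he y (List.mem_cons_of_mem _ (List.take_subset _ _ hy)), ?_, hu_sum⟩
    intro i
    rcases le_or_gt i (k-2) with hi | hi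
    · rw [hu_ht i hi]
      rcases Nat.eq_zero_or_pos i with rfl | hip
      · rw [show (0:ℕ) + 1 = 1 by rfl, h1]; omega
      · have := hposk (i+1) (by omega) (by omega)
        omega
    · rw [ht_large (by omega), hu_sum]
  -- heights of v
  have hv_len : (l.drop k).length = n - k := by
    rw [List.length_drop]; omega
  have hv_ht : ∀ j, ht (l.drop k) j = ht l (k + j) := by
    intro j
    have := ht_drop (l := l) (i := k) (by omega) j
    rw [hk0] at this
    omega
  have hv_sum : (l.drop k).sum = 0 := by
    rw [← ht_large (le_of_eq hv_len), hv_ht, show k + (n - k) = n by omega,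
      ht_large (by omega), hs]
  have hok_v : ok (l.drop k) := by
    refine ⟨fun y hy => he y (List.drop_subset _ _ hy), ?_, hv_sum⟩
    intro j
    rcases le_or_gt j (n - k) with hj | hj
    · rw [hv_ht j]
      exact hnn _
    · rw [ht_large (by omega), hv_sum]
  -- reconstruction
  have hrec : l = 1 :: (l.tail.take (k-2) ++ (-1) :: l.drop k) := by
    rw [htail]
    have h1' : t = t.take (k-2) ++ t.drop (k-2) := (List.take_append_drop _ _).symm
    have h2' : t.drop (k-2) = (-1) :: l.drop k := by
      have e1 : t.drop (k-2) = l.drop (k-1) := by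
        have : l.drop (k-1) = (l.drop 1).drop (k-2) := by
          rw [List.drop_drop, show 1 + (k-2) = k - 1 by omega]
        rw [this]
        rfl
      rw [e1, List.drop_eq_getElem_cons hklt, hhk1.2, show k - 1 + 1 = k by omega]
    conv_lhs => rw [hl, h1']
    rw [h2']
  exact ⟨hrec, hu_len, hv_len, hok_u, hok_v⟩

end MotzkinAux
namespace MotzkinAux

lemma glue_facts {n k : ℕ} (hk2 : 2 ≤ k) (hkn : k ≤ n) {u v : List ℤ}
    (hu : u.length = k - 2) (hv : v.length = n - k) (hou : ok u) (hov : ok v) :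
    (1 :: (u ++ (-1) :: v)) ∈ mL n ∧ ht (1 :: (u ++ (-1) :: v)) 1 = 1 ∧
      fr (1 :: (u ++ (-1) :: v)) = k := by
  obtain ⟨heu, hnu, hsu⟩ := hou
  obtain ⟨hev, hnv, hsv⟩ := hov
  set g : List ℤ := 1 :: (u ++ (-1) :: v) with hg
  have hglen : g.length = n := by simp [hg]; omega
  have hlow : ∀ i, i ≤ u.length → ht g (i+1) = 1 + ht u i := fun i hi => ht_glue_low u v hi
  have hhigh : ∀ j, ht g (u.length + 2 + j) = ht v j := ht_glue_high u v hsu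
  have hgnn : ∀ i, 0 ≤ ht g i := by
    intro i
    cases i with
    | zero => simp
    | succ j =>
      rcases le_or_gt j u.length with hj | hj
      · rw [hlow j hj]
        have := hnu j
        omega
      · rw [show j + 1 = u.length + 2 + (j - u.length - 1) by omega, hhigh]
        exact hnv _
  have hgsum : g.sum = 0 := by
    simp [hg, hsu, hsv]
  have hmem : g ∈ mL n := by
    refine mem_mL.mpr ⟨hglen, ?_, hgnn, hgsum⟩
    intro x hx
    rw [hg] at hx
    rcases List.mem_cons.mp hx with rfl | hx'
    · tauto
    · rcases List.mem_append.mp hx' with h | h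
      · exact heu x h
      · rcases List.mem_cons.mp h with rfl | h'
        · tauto
        · exact hev x h'
  have hg1 : ht g 1 = 1 := by
    have := hlow 0 (Nat.zero_le _)
    simpa using this
  have hgk : ht g k = 0 := by
    rw [show k = u.length + 2 + 0 by omega, hhigh]
    simp
  have hex : ∃ i, 0 < i ∧ ht g i = 0 := ⟨k, by omega, hgk⟩
  have hfr : fr g = k := by
    rw [fr, dif_pos hex, Nat.find_eq_iff]
    refine ⟨⟨by omega, hgk⟩, ?_⟩
    rintro m hm ⟨hm0, hmht⟩
    obtain ⟨j, rfl⟩ : ∃ j, m = j + 1 := ⟨m - 1, by omega⟩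
    rw [hlow j (by omega)] at hmht
    have := hnu j
    omega
  exact ⟨hmem, hg1, hfr⟩

lemma f_glue {k : ℕ} (hk2 : 2 ≤ k) {u v : List ℤ} (hu : u.length = k - 2)
    (hus : u.sum = 0) (hunn : ∀ i, 0 ≤ ht u i) (hvnn : ∀ i, 0 ≤ ht v i) :
    (X : ℤ[X]) ^ (ari (1 :: (u ++ (-1) :: v))).toNat
      = X ^ (k-1) * ((X : ℤ[X]) ^ (ari u).toNat * X ^ (ari v).toNat) := by
  have h := ari_glue u v hus
  have h1 := ari_nonneg hunn
  have h2 := ari_nonneg hvnn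
  have he : (ari (1 :: (u ++ (-1) :: v))).toNat
      = (k - 1) + ((ari u).toNat + (ari v).toNat) := by
    rw [h, hu]
    omega
  rw [he, pow_add, pow_add]

end MotzkinAux
namespace MotzkinAux

lemma ht_one (x : ℤ) (l : List ℤ) : ht (x :: l) 1 = x := by
  have := ht_cons_succ x l 0
  simpa using this

lemma ht_one_of {l : List ℤ} (hlen : 0 < l.length)
    (he : ∀ x ∈ l, x = 1 ∨ x = 0 ∨ x = -1) (hnn : ∀ i, 0 ≤ ht l i)
    (hne : ht l 1 ≠ 0) : ht l 1 = 1 := by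
  have hg : ht l 1 = l[0] := by
    have := ht_succ_get (l := l) (i := 0) hlen
    simpa using this
  have hm := he _ (List.getElem_mem hlen)
  have h0 := hnn 1
  rw [hg] at h0 hne ⊢
  rcases hm with h | h | h <;> omega

end MotzkinAux


open MotzkinAux in
/-- M_0 = 1 and for n ≥ 1,
M_n(q) = M_{n−1}(q) + Σ_{k=2}^{n} q^{k−1}·M_{k−2}(q)·M_{n−k}(q). -/
theorem stmt14 :
    M 0 = 1 ∧ ∀ n : ℕ, 1 ≤ n →
      M n = M (n - 1)
        + ∑ k ∈ Finset.Icc 2 n, (X : ℤ[X]) ^ (k - 1) * M (k - 2) * M (n - k) := by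
  constructor
  · rw [M_eq 0]
    have h0 : mL 0 = {([] : List ℤ)} := by
      ext l
      rw [mem_mL, Finset.mem_singleton]
      constructor
      · rintro ⟨h, -⟩
        exact List.length_eq_zero_iff.mp h
      · rintro rfl
        exact ⟨rfl, fun x hx => by simp at hx, fun i => le_of_eq (ht_nil i).symm, rfl⟩
    rw [h0, Finset.sum_singleton]
    simp [ari]
  · intro n hn
    rw [M_eq n, ← Finset.sum_filter_add_sum_filter_not (mL n) (fun l => ht l 1 = 0)]
    congr 1
    · -- paths starting with a level step
      rw [M_eq]
      refine Finset.sum_bij' (fun l _ => l.tail) (fun t _ => (0 : ℤ) :: t) ?_ ?_ ?_ ?_ ?_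
      · intro l hl
        rw [Finset.mem_filter, mem_mL] at hl
        obtain ⟨⟨hlen, he, hnn, hs⟩, h10⟩ := hl
        obtain ⟨x, t, rfl⟩ : ∃ x t, l = x :: t := by
          cases l with
          | nil => simp at hlen; omega
          | cons x t => exact ⟨x, t, rfl⟩
        obtain rfl : x = 0 := by rw [ht_one] at h10; exact h10
        rw [mem_mL]
        refine ⟨by simp at hlen ⊢; omega,
          fun y hy => he y (List.mem_cons_of_mem _ hy), ?_, by simpa using hs⟩
        intro i
        have := hnn (i + 1)
        rw [ht_cons_succ, zero_add] at this
        exact this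
      · intro t ht'
        rw [mem_mL] at ht'
        obtain ⟨hlen, he, hnn, hs⟩ := ht'
        rw [Finset.mem_filter, mem_mL]
        refine ⟨⟨by simp [hlen]; omega, ?_, ?_, by simpa using hs⟩, ht_one 0 t⟩
        · intro x hx
          rcases List.mem_cons.mp hx with rfl | h
          · tauto
          · exact he x h
        · intro i
          cases i with
          | zero => simp
          | succ j => rw [ht_cons_succ, zero_add]; exact hnn j
      · intro l hl
        rw [Finset.mem_filter, mem_mL] at hl
        obtain ⟨⟨hlen, -, -, -⟩, h10⟩ := hl
        obtain ⟨x, t, rfl⟩ : ∃ x t, l = x :: t := by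
          cases l with
          | nil => simp at hlen; omega
          | cons x t => exact ⟨x, t, rfl⟩
        obtain rfl : x = 0 := by rw [ht_one] at h10; exact h10
        rfl
      · intro t _
        rfl
      · intro l hl
        rw [Finset.mem_filter, mem_mL] at hl
        obtain ⟨⟨hlen, -, -, -⟩, h10⟩ := hl
        obtain ⟨x, t, rfl⟩ : ∃ x t, l = x :: t := by
          cases l with
          | nil => simp at hlen; omega
          | cons x t => exact ⟨x, t, rfl⟩
        obtain rfl : x = 0 := by rw [ht_one] at h10; exact h10
        show (X : ℤ[X]) ^ (ari ((0:ℤ) :: t)).toNat = X ^ (ari t).toNat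
        rw [ari_cons_zero]
    · -- paths starting with an up step
      have hmap : ∀ l ∈ (mL n).filter (fun l => ¬ht l 1 = 0), fr l ∈ Finset.Icc 2 n := by
        intro l hl
        rw [Finset.mem_filter, mem_mL] at hl
        obtain ⟨⟨hlen, he, hnn, hs⟩, hne⟩ := hl
        have h1 : ht l 1 = 1 := ht_one_of (by omega) he hnn hne
        have hex : ∃ i, 0 < i ∧ ht l i = 0 :=
          ⟨n, by omega, by rw [ht_large (by omega)]; exact hs⟩
        obtain ⟨hfp, hf0, hfmin⟩ := fr_facts hex
        have hle : fr l ≤ n := fr_le hex (by omega) (by rw [ht_large (by omega)]; exact hs)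
        have hne1 : fr l ≠ 1 := fun h => by rw [h, h1] at hf0; omega
        rw [Finset.mem_Icc]
        omega
      rw [← Finset.sum_fiberwise_of_maps_to hmap]
      refine Finset.sum_congr rfl ?_
      intro k hk
      rw [Finset.mem_Icc] at hk
      obtain ⟨hk2, hkn⟩ := hk
      rw [M_eq (k-2), M_eq (n-k), mul_assoc, Finset.sum_mul_sum, ← Finset.sum_product',
        Finset.mul_sum]
      have unpack : ∀ l ∈ Finset.filter (fun l => fr l = k)
          ((mL n).filter (fun l => ¬ht l 1 = 0)),
          l = 1 :: (l.tail.take (k-2) ++ (-1) :: l.drop k) ∧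
            (l.tail.take (k-2)).length = k - 2 ∧ (l.drop k).length = n - k ∧
            ok (l.tail.take (k-2)) ∧ ok (l.drop k) := by
        intro l hl
        rw [Finset.mem_filter, Finset.mem_filter, mem_mL] at hl
        obtain ⟨⟨⟨hlen, he, hnn, hs⟩, hne⟩, hfrk⟩ := hl
        have h1 : ht l 1 = 1 := ht_one_of (by omega) he hnn hne
        have hex : ∃ i, 0 < i ∧ ht l i = 0 :=
          ⟨n, by omega, by rw [ht_large (by omega)]; exact hs⟩
        obtain ⟨hfp, hf0, hfmin⟩ := fr_facts hex
        rw [hfrk] at hf0 hfmin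
        exact decomp hk2 hkn hlen he hnn h1 hf0 hs hfmin
      refine Finset.sum_bij' (fun l _ => (l.tail.take (k-2), l.drop k))
        (fun p _ => (1 : ℤ) :: (p.1 ++ (-1) :: p.2)) ?_ ?_ ?_ ?_ ?_
      · intro l hl
        obtain ⟨-, hul, hvl, hou, hov⟩ := unpack l hl
        rw [Finset.mem_product]
        exact ⟨mem_mL.mpr ⟨hul, hou⟩, mem_mL.mpr ⟨hvl, hov⟩⟩
      · intro p hp
        rw [Finset.mem_product, mem_mL, mem_mL] at hp
        obtain ⟨⟨hul, hou⟩, ⟨hvl, hov⟩⟩ := hp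
        obtain ⟨hmem, hg1, hfr⟩ := glue_facts hk2 hkn hul hvl hou hov
        rw [Finset.mem_filter, Finset.mem_filter]
        exact ⟨⟨hmem, by rw [hg1]; norm_num⟩, hfr⟩
      · intro l hl
        exact (unpack l hl).1.symm
      · rintro ⟨u, v⟩ hp
        rw [Finset.mem_product, mem_mL, mem_mL] at hp
        obtain ⟨⟨hul, -⟩, ⟨hvl, -⟩⟩ := hp
        have hul' : u.length = k - 2 := hul
        have hvl' : v.length = n - k := hvl
        simp only [Prod.mk.injEq]
        constructor
        · rw [show ((1:ℤ) :: (u ++ (-1) :: v)).tail = u ++ (-1) :: v from rfl, ← hul]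
          exact List.take_left
        · rw [show k = (k - 1) + 1 by omega, List.drop_succ_cons,
            show k - 1 = u.length + 1 by omega, List.drop_length_add_append]
          rfl
      · intro l hl
        obtain ⟨hrec, hul, hvl, hou, hov⟩ := unpack l hl
        conv_lhs => rw [hrec]
        exact f_glue hk2 hul hou.2.2 hou.2.1 hov.2.1
end
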